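/- Let n ≥ 2 and let σ = (σ₁, σ₂) be a homeomorphism of the triangle T = {(x,y) : 0 ≤ x ≤ y ≤ 1} onto itself that fixes the diagonal Δ = {(t,t) : 0 ≤ t ≤ 1} pointwise. Define h : Fₙ([0,1]) → Fₙ([0,1]) by h(D) = D if |D| = 1, and otherwise h(D) = ψ([min D, max D], [σ₁(min D, max D), σ₂(min D, max D)])(D), where ψ(J,K) is the increasing linear homeomorphism of the interval J onto the interval K. Then h is a homeomorphism of Fₙ([0,1]) onto itself. -/

import Mathlib

open TopologicalSpace

/-- The `n`-th symmetric product `Fₙ(X)`: nonempty subsets of `X` with at most `n` points,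
topologized as a subspace of the hyperspace of nonempty compact sets with the Hausdorff
metric (which induces the Vietoris topology). -/
def SymmProd (X : Type*) [MetricSpace X] (n : ℕ) : Type _ :=
  {A : NonemptyCompacts X // (A : Set X).Finite ∧ (A : Set X).ncard ≤ n}

noncomputable instance {X : Type*} [MetricSpace X] {n : ℕ} : MetricSpace (SymmProd X n) := by
  unfold SymmProd; infer_instance

def SymmProd.toSet {X : Type*} [MetricSpace X] {n : ℕ} (A : SymmProd X n) : Set X := A.1

/-- The closed triangle in `ℝ²` with vertices `(0,0)`, `(0,1)`, `(1,1)`. -/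
def Tri : Set (ℝ × ℝ) := {p | 0 ≤ p.1 ∧ p.1 ≤ p.2 ∧ p.2 ≤ 1}

namespace Stmt10Aux

open Metric Set

noncomputable section

def lmap (a b c d t : ℝ) : ℝ := ((t - a) / (b - a)) * d + ((b - t) / (b - a)) * c

lemma lmap_eq {a b : ℝ} (h : a ≠ b) (c d t : ℝ) :
    lmap a b c d t = c + (t - a) * ((d - c) / (b - a)) := by
  have hba : b - a ≠ 0 := sub_ne_zero.2 (Ne.symm h)
  unfold lmap; field_simp; ring

lemma lmap_left {a b : ℝ} (h : a ≠ b) (c d : ℝ) : lmap a b c d a = c := by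
  rw [lmap_eq h]; simp

lemma lmap_right {a b : ℝ} (h : a ≠ b) (c d : ℝ) : lmap a b c d b = d := by
  have hba : b - a ≠ 0 := sub_ne_zero.2 (Ne.symm h)
  rw [lmap_eq h]; field_simp; ring

lemma lmap_lmap {a b c d : ℝ} (h : a ≠ b) (h2 : c ≠ d) (t : ℝ) :
    lmap c d a b (lmap a b c d t) = t := by
  have hba : b - a ≠ 0 := sub_ne_zero.2 (Ne.symm h)
  have hdc : d - c ≠ 0 := sub_ne_zero.2 (Ne.symm h2)
  unfold lmap; field_simp; ring

lemma lmap_mono {a b c d : ℝ} (hab : a < b) (hcd : c ≤ d) :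
    Monotone (lmap a b c d) := by
  intro s t hst
  rw [lmap_eq hab.ne, lmap_eq hab.ne]
  have h1 : 0 ≤ (d - c) / (b - a) := div_nonneg (by linarith) (by linarith)
  nlinarith

lemma lmap_mem {a b c d t : ℝ} (hab : a < b) (hcd : c ≤ d) (ht : t ∈ Icc a b) :
    lmap a b c d t ∈ Icc c d := by
  constructor
  · have := lmap_mono hab hcd ht.1; rwa [lmap_left hab.ne] at this
  · have := lmap_mono hab hcd ht.2; rwa [lmap_right hab.ne] at this

lemma lmap_dist {a b c d : ℝ} (hab : a < b) (hcd : c ≤ d) (s t : ℝ) :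
    dist (lmap a b c d s) (lmap a b c d t) = dist s t * ((d - c) / (b - a)) := by
  have h1 : (0:ℝ) ≤ (d - c) / (b - a) := div_nonneg (by linarith) (by linarith)
  rw [lmap_eq hab.ne, lmap_eq hab.ne, Real.dist_eq, Real.dist_eq,
    show c + (s - a) * ((d - c) / (b - a)) - (c + (t - a) * ((d - c) / (b - a)))
      = (s - t) * ((d - c) / (b - a)) by ring,
    abs_mul, abs_of_nonneg h1]



lemma lmap_close {a b c d a₀ b₀ c₀ d₀ x r δ ε₂ : ℝ}
    (hr : 0 < r) (hq : b₀ - a₀ = r)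
    (hp2 : r / 2 ≤ b - a) (hp1 : b - a ≤ 1)
    (hx : x ∈ Icc a b)
    (ha : |a - a₀| ≤ δ) (hb : |b - b₀| ≤ δ)
    (hc : |c - c₀| ≤ ε₂) (hd : |d - d₀| ≤ ε₂)
    (hc₀ : 0 ≤ c₀) (hd₀ : c₀ ≤ d₀) (hd₀1 : d₀ ≤ 1) :
    |lmap a b c d x - lmap a₀ b₀ c₀ d₀ x| ≤ 3 * ε₂ + 6 * δ / r ^ 2 := by
  have hδ : 0 ≤ δ := le_trans (abs_nonneg _) ha
  have hε₂ : 0 ≤ ε₂ := le_trans (abs_nonneg _) hc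
  have hp : (0:ℝ) < b - a := lt_of_lt_of_le (by linarith) hp2
  have hq0 : (0:ℝ) < b₀ - a₀ := by rw [hq]; exact hr
  set u : ℝ := (x - a) / (b - a) with hu
  set u₀ : ℝ := (x - a₀) / (b₀ - a₀) with hu₀
  have hu0 : 0 ≤ u := div_nonneg (by linarith [hx.1]) hp.le
  have hu1 : u ≤ 1 := (div_le_one hp).2 (by linarith [hx.2])
  have hK : |u - u₀| ≤ 6 * δ / r ^ 2 := by
    have hsub : u - u₀ = ((x - a) * (b₀ - a₀) - (b - a) * (x - a₀)) / ((b - a) * (b₀ - a₀)) :=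
      div_sub_div _ _ hp.ne' hq0.ne'
    have hN : |(x - a) * (b₀ - a₀) - (b - a) * (x - a₀)| ≤ 3 * δ := by
      have e1 : (x - a) * (b₀ - a₀) - (b - a) * (x - a₀)
          = (x - a) * ((b₀ - a₀) - (b - a)) - (a - a₀) * (b - a) := by ring
      rw [e1]
      have h1 : |(x - a) * ((b₀ - a₀) - (b - a))| ≤ 2 * δ := by
        rw [abs_mul]
        have hxa : |x - a| ≤ 1 := by
          rw [abs_of_nonneg (by linarith [hx.1])]; linarith [hx.2]
        have hqp : |(b₀ - a₀) - (b - a)| ≤ 2 * δ := by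
          have : (b₀ - a₀) - (b - a) = -(b - b₀) + (a - a₀) := by ring
          rw [this]
          calc |(-(b - b₀)) + (a - a₀)| ≤ |(-(b - b₀))| + |a - a₀| := abs_add_le _ _
            _ ≤ 2 * δ := by rw [abs_neg]; linarith
        calc |x - a| * |(b₀ - a₀) - (b - a)| ≤ 1 * (2 * δ) :=
              mul_le_mul hxa hqp (abs_nonneg _) (by norm_num)
          _ = 2 * δ := by ring
      have h2 : |(a - a₀) * (b - a)| ≤ δ := by
        rw [abs_mul, abs_of_pos hp]
        calc |a - a₀| * (b - a) ≤ δ * 1 := mul_le_mul ha hp1 hp.le hδ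
          _ = δ := by ring
      calc |(x - a) * ((b₀ - a₀) - (b - a)) - (a - a₀) * (b - a)|
          ≤ |(x - a) * ((b₀ - a₀) - (b - a))| + |(a - a₀) * (b - a)| := abs_sub _ _
        _ ≤ 3 * δ := by linarith
    have hden : r ^ 2 / 2 ≤ (b - a) * (b₀ - a₀) := by
      rw [hq]; nlinarith
    rw [hsub, abs_div, abs_of_pos (mul_pos hp hq0)]
    have h3 : (0:ℝ) < r ^ 2 / 2 := by positivity
    calc |(x - a) * (b₀ - a₀) - (b - a) * (x - a₀)| / ((b - a) * (b₀ - a₀))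
        ≤ (3 * δ) / (r ^ 2 / 2) := div_le_div₀ (by positivity) hN h3 hden
      _ = 6 * δ / r ^ 2 := by field_simp; ring
  have hab : a ≠ b := fun h => by rw [h] at hp; simp at hp
  have hab₀ : a₀ ≠ b₀ := fun h => by rw [h] at hq0; simp at hq0
  have e1 : lmap a b c d x = c + u * (d - c) := by rw [lmap_eq hab]; rw [hu]; ring
  have e2 : lmap a₀ b₀ c₀ d₀ x = c₀ + u₀ * (d₀ - c₀) := by rw [lmap_eq hab₀]; rw [hu₀]; ring
  rw [e1, e2]
  have eΔ : c + u * (d - c) - (c₀ + u₀ * (d₀ - c₀))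
      = (c - c₀) + u * ((d - c) - (d₀ - c₀)) + (u - u₀) * (d₀ - c₀) := by ring
  rw [eΔ]
  have t1 : |u * ((d - c) - (d₀ - c₀))| ≤ 2 * ε₂ := by
    rw [abs_mul]
    have he : |(d - c) - (d₀ - c₀)| ≤ 2 * ε₂ := by
      have : (d - c) - (d₀ - c₀) = (d - d₀) - (c - c₀) := by ring
      rw [this]
      calc |(d - d₀) - (c - c₀)| ≤ |d - d₀| + |c - c₀| := abs_sub _ _
        _ ≤ 2 * ε₂ := by linarith
    calc |u| * |(d - c) - (d₀ - c₀)| ≤ 1 * (2 * ε₂) :=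
        mul_le_mul (by rwa [abs_of_nonneg hu0]) he (abs_nonneg _) (by norm_num)
      _ = 2 * ε₂ := by ring
  have t2 : |(u - u₀) * (d₀ - c₀)| ≤ 6 * δ / r ^ 2 := by
    rw [abs_mul]
    have hdc1 : |d₀ - c₀| ≤ 1 := by rw [abs_of_nonneg (by linarith)]; linarith
    have h6 : (0:ℝ) ≤ 6 * δ / r ^ 2 := div_nonneg (by linarith) (by positivity)
    calc |u - u₀| * |d₀ - c₀| ≤ (6 * δ / r ^ 2) * 1 := mul_le_mul hK hdc1 (abs_nonneg _) h6
      _ = 6 * δ / r ^ 2 := mul_one _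
  have final : |c - c₀ + u * (d - c - (d₀ - c₀)) + (u - u₀) * (d₀ - c₀)|
      ≤ |c - c₀| + |u * (d - c - (d₀ - c₀))| + |(u - u₀) * (d₀ - c₀)| := abs_add_three _ _ _
  linarith

variable {n : ℕ}

/-- The set of a symmetric-product point, as a set of reals. -/
def rS (D : SymmProd unitInterval n) : Set ℝ := (↑) '' D.toSet

lemma rS_nonempty (D : SymmProd unitInterval n) : (rS D).Nonempty :=
  D.1.nonempty.image _

lemma rS_finite (D : SymmProd unitInterval n) : (rS D).Finite :=
  D.2.1.image _

lemma rS_subset (D : SymmProd unitInterval n) : rS D ⊆ Icc 0 1 := by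
  rintro x ⟨y, _, rfl⟩; exact y.2

def aD (D : SymmProd unitInterval n) : ℝ := sInf (rS D)
def bD (D : SymmProd unitInterval n) : ℝ := sSup (rS D)

lemma aD_mem (D : SymmProd unitInterval n) : aD D ∈ rS D :=
  (rS_nonempty D).csInf_mem (rS_finite D)

lemma bD_mem (D : SymmProd unitInterval n) : bD D ∈ rS D :=
  (rS_nonempty D).csSup_mem (rS_finite D)

lemma aD_le {D : SymmProd unitInterval n} {x : ℝ} (hx : x ∈ rS D) : aD D ≤ x :=
  csInf_le (rS_finite D).bddBelow hx

lemma le_bD {D : SymmProd unitInterval n} {x : ℝ} (hx : x ∈ rS D) : x ≤ bD D :=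
  le_csSup (rS_finite D).bddAbove hx

lemma aD_nonneg (D : SymmProd unitInterval n) : 0 ≤ aD D := (rS_subset D (aD_mem D)).1
lemma bD_le_one (D : SymmProd unitInterval n) : bD D ≤ 1 := (rS_subset D (bD_mem D)).2
lemma aD_le_bD (D : SymmProd unitInterval n) : aD D ≤ bD D := le_bD (aD_mem D)

/-- The endpoint pair, as a point of the triangle. -/
def pD (D : SymmProd unitInterval n) : Tri :=
  ⟨(aD D, bD D), ⟨aD_nonneg D, aD_le_bD D, bD_le_one D⟩⟩

variable (σ : Tri ≃ₜ Tri)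

def cD (D : SymmProd unitInterval n) : ℝ := (σ (pD D) : ℝ × ℝ).1
def dD (D : SymmProd unitInterval n) : ℝ := (σ (pD D) : ℝ × ℝ).2

lemma cD_nonneg (D : SymmProd unitInterval n) : 0 ≤ cD σ D := (σ (pD D)).2.1
lemma cD_le_dD (D : SymmProd unitInterval n) : cD σ D ≤ dD σ D := (σ (pD D)).2.2.1
lemma dD_le_one (D : SymmProd unitInterval n) : dD σ D ≤ 1 := (σ (pD D)).2.2.2

def g (D : SymmProd unitInterval n) : ℝ → ℝ := lmap (aD D) (bD D) (cD σ D) (dD σ D)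

def hsetI (D : SymmProd unitInterval n) : Set unitInterval :=
  if aD D = bD D then D.toSet
  else (fun x : unitInterval => projIcc (0:ℝ) 1 zero_le_one (g σ D x)) '' D.toSet

lemma hsetI_finite (D : SymmProd unitInterval n) : (hsetI σ D).Finite := by
  unfold hsetI; split
  · exact D.2.1
  · exact D.2.1.image _

lemma hsetI_nonempty (D : SymmProd unitInterval n) : (hsetI σ D).Nonempty := by
  unfold hsetI; split
  · exact D.1.nonempty
  · exact D.1.nonempty.image _

lemma hsetI_ncard (D : SymmProd unitInterval n) : (hsetI σ D).ncard ≤ n := by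
  unfold hsetI; split
  · exact D.2.2
  · exact le_trans (Set.ncard_image_le D.2.1) D.2.2

/-- The map on the symmetric product induced by `σ`. -/
def hmap (D : SymmProd unitInterval n) : SymmProd unitInterval n :=
  ⟨⟨⟨hsetI σ D, (hsetI_finite σ D).isCompact⟩, hsetI_nonempty σ D⟩,
    hsetI_finite σ D, hsetI_ncard σ D⟩

lemma hmap_toSet (D : SymmProd unitInterval n) : (hmap σ D).toSet = hsetI σ D := rfl

lemma symmProd_ext {A B : SymmProd unitInterval n} (h : A.toSet = B.toSet) : A = B :=
  Subtype.ext (NonemptyCompacts.ext h)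

lemma rS_inj {A B : SymmProd unitInterval n} (h : rS A = rS B) : A = B :=
  symmProd_ext ((Set.image_injective.2 Subtype.coe_injective) h)

lemma hmap_of_eq {D : SymmProd unitInterval n} (h : aD D = bD D) : hmap σ D = D := by
  apply symmProd_ext
  rw [hmap_toSet, hsetI, if_pos h]

lemma rS_eq_singleton {D : SymmProd unitInterval n} (h : aD D = bD D) :
    rS D = {aD D} := by
  apply Subset.antisymm
  · intro x hx
    have h1 := aD_le hx
    have h2 := le_bD hx
    simp only [mem_singleton_iff]
    linarith [h ▸ h2]
  · intro x hx
    rw [mem_singleton_iff] at hx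
    exact hx ▸ aD_mem D

lemma ncard_eq_one_iff (D : SymmProd unitInterval n) :
    D.toSet.ncard = 1 ↔ aD D = bD D := by
  constructor
  · intro h
    obtain ⟨x, hx⟩ := Set.ncard_eq_one.1 h
    have : rS D = {(x : ℝ)} := by rw [rS, hx, Set.image_singleton]
    rw [aD, bD, this, csInf_singleton, csSup_singleton]
  · intro h
    have h1 : rS D = {aD D} := rS_eq_singleton h
    have h2 : (rS D).ncard = 1 := by rw [h1]; exact Set.ncard_singleton _
    rwa [rS, Set.ncard_image_of_injective _ Subtype.coe_injective] at h2

lemma rS_hmap {D : SymmProd unitInterval n} (h : aD D < bD D) :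
    rS (hmap σ D) = g σ D '' rS D := by
  rw [rS, hmap_toSet, hsetI, if_neg h.ne, rS, Set.image_image, Set.image_image]
  apply Set.image_congr
  intro x hx
  have hmem : g σ D (x : ℝ) ∈ Icc (cD σ D) (dD σ D) :=
    lmap_mem h (cD_le_dD σ D) ⟨aD_le ⟨x, hx, rfl⟩, le_bD ⟨x, hx, rfl⟩⟩
  have h01 : g σ D (x : ℝ) ∈ Icc (0:ℝ) 1 :=
    ⟨le_trans (cD_nonneg σ D) hmem.1, le_trans hmem.2 (dD_le_one σ D)⟩
  rw [Set.projIcc_of_mem zero_le_one h01]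

lemma cD_lt_dD (hdiag : ∀ p : Tri, (p : ℝ × ℝ).1 = (p : ℝ × ℝ).2 → σ p = p)
    {D : SymmProd unitInterval n} (h : aD D < bD D) : cD σ D < dD σ D := by
  rcases lt_or_eq_of_le (cD_le_dD σ D) with h' | h'
  · exact h'
  · exfalso
    have hq : (↑(σ (pD D)) : ℝ × ℝ).1 = (↑(σ (pD D)) : ℝ × ℝ).2 := h'
    have h1 : σ (σ (pD D)) = σ (pD D) := hdiag _ hq
    have h2 : σ (pD D) = pD D := by
      have := congrArg σ.symm h1
      simpa only [Homeomorph.symm_apply_apply] using this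
    have h3 : (↑(pD D) : ℝ × ℝ).1 = (↑(pD D) : ℝ × ℝ).2 := by rw [← h2]; exact hq
    exact h.ne h3

lemma aD_hmap {D : SymmProd unitInterval n} (h : aD D < bD D) :
    aD (hmap σ D) = cD σ D := by
  rw [aD, rS_hmap σ h]
  apply IsLeast.csInf_eq
  constructor
  · exact ⟨aD D, aD_mem D, lmap_left h.ne _ _⟩
  · rintro y ⟨x, hx, rfl⟩
    have := lmap_mono h (cD_le_dD σ D) (aD_le hx)
    rwa [lmap_left h.ne] at this

lemma bD_hmap {D : SymmProd unitInterval n} (h : aD D < bD D) :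
    bD (hmap σ D) = dD σ D := by
  rw [bD, rS_hmap σ h]
  apply IsGreatest.csSup_eq
  constructor
  · exact ⟨bD D, bD_mem D, lmap_right h.ne _ _⟩
  · rintro y ⟨x, hx, rfl⟩
    have := lmap_mono h (cD_le_dD σ D) (le_bD hx)
    rwa [lmap_right h.ne] at this

lemma pD_hmap {D : SymmProd unitInterval n} (h : aD D < bD D) :
    pD (hmap σ D) = σ (pD D) := by
  apply Subtype.ext
  apply Prod.ext
  · exact aD_hmap σ h
  · exact bD_hmap σ h

lemma hmap_hmap (hdiag : ∀ p : Tri, (p : ℝ × ℝ).1 = (p : ℝ × ℝ).2 → σ p = p)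
    (D : SymmProd unitInterval n) : hmap σ.symm (hmap σ D) = D := by
  rcases lt_or_eq_of_le (aD_le_bD D) with h | h
  · have hcd := cD_lt_dD σ hdiag h
    have ha' : aD (hmap σ D) = cD σ D := aD_hmap σ h
    have hb' : bD (hmap σ D) = dD σ D := bD_hmap σ h
    have h2 : aD (hmap σ D) < bD (hmap σ D) := by rw [ha', hb']; exact hcd
    have hc' : cD σ.symm (hmap σ D) = aD D := by
      rw [cD, pD_hmap σ h, σ.symm_apply_apply]; rfl
    have hd' : dD σ.symm (hmap σ D) = bD D := by
      rw [dD, pD_hmap σ h, σ.symm_apply_apply]; rfl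
    apply rS_inj
    rw [rS_hmap σ.symm h2, rS_hmap σ h, Set.image_image]
    have hfun : ∀ x : ℝ, g σ.symm (hmap σ D) (g σ D x) = x := by
      intro x
      rw [g, g, ha', hb', hc', hd']
      exact lmap_lmap h.ne hcd.ne x
    calc (fun x => g σ.symm (hmap σ D) (g σ D x)) '' rS D
        = (fun x => x) '' rS D := by
          apply Set.image_congr; intro x _; exact hfun x
      _ = rS D := Set.image_id _
  · rw [hmap_of_eq σ h, hmap_of_eq σ.symm h]

lemma dist_symmProd (A B : SymmProd unitInterval n) :
    dist A B = hausdorffDist (rS A) (rS B) := by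
  rw [rS, rS, hausdorffDist_image isometry_subtype_coe]
  rfl

lemma hED (A B : SymmProd unitInterval n) :
    EMetric.hausdorffEdist (rS A) (rS B) ≠ ⊤ :=
  hausdorffEdist_ne_top_of_nonempty_of_bounded (rS_nonempty A) (rS_nonempty B)
    (rS_finite A).isBounded (rS_finite B).isBounded

lemma bD_sub_le (A B : SymmProd unitInterval n) :
    bD A - bD B ≤ hausdorffDist (rS A) (rS B) := by
  rw [sub_le_iff_le_add, add_comm]
  apply le_of_forall_pos_le_add
  intro ε hε
  obtain ⟨y, hy, hxy⟩ := exists_dist_lt_of_hausdorffDist_lt (bD_mem A)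
    (lt_add_of_pos_right _ hε) (hED A B)
  have h1 : y ≤ bD B := le_bD hy
  have h2 : |bD A - y| < hausdorffDist (rS A) (rS B) + ε := hxy
  rw [abs_lt] at h2
  linarith [h2.2]

lemma abs_bD_le (A B : SymmProd unitInterval n) :
    |bD A - bD B| ≤ hausdorffDist (rS A) (rS B) := by
  rw [abs_sub_le_iff]
  exact ⟨bD_sub_le A B, by rw [hausdorffDist_comm]; exact bD_sub_le B A⟩

lemma aD_sub_le (A B : SymmProd unitInterval n) :
    aD B - aD A ≤ hausdorffDist (rS A) (rS B) := by
  rw [sub_le_iff_le_add, add_comm]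
  apply le_of_forall_pos_le_add
  intro ε hε
  obtain ⟨y, hy, hxy⟩ := exists_dist_lt_of_hausdorffDist_lt (aD_mem A)
    (lt_add_of_pos_right _ hε) (hED A B)
  have h1 : aD B ≤ y := aD_le hy
  have h2 : |aD A - y| < hausdorffDist (rS A) (rS B) + ε := hxy
  rw [abs_lt] at h2
  linarith [h2.1]

lemma abs_aD_le (A B : SymmProd unitInterval n) :
    |aD A - aD B| ≤ hausdorffDist (rS A) (rS B) := by
  rw [abs_sub_le_iff]
  exact ⟨by rw [hausdorffDist_comm]; exact aD_sub_le B A, aD_sub_le A B⟩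

lemma hmap_continuous (hdiag : ∀ p : Tri, (p : ℝ × ℝ).1 = (p : ℝ × ℝ).2 → σ p = p) :
    Continuous (hmap σ (n := n)) := by
  rw [Metric.continuous_iff]
  intro D₀ ε hε
  rcases lt_or_eq_of_le (aD_le_bD D₀) with h0 | h0
  -- Case: aD D₀ < bD D₀
  · set r : ℝ := bD D₀ - aD D₀ with hrdef
    have hr : 0 < r := by simp only [hrdef]; linarith
    set ε₂ : ℝ := ε / 9 with hε₂def
    have hε₂ : 0 < ε₂ := by positivity
    obtain ⟨δ₁, hδ₁pos, hδ₁⟩ := Metric.continuous_iff.1 σ.continuous (pD D₀) ε₂ hε₂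
    set δ : ℝ := min δ₁ (min (r / 4) (min (ε * r ^ 2 / 36) (ε * r / 6))) with hδdef
    have hδpos : 0 < δ := by
      apply lt_min hδ₁pos
      apply lt_min (by positivity)
      exact lt_min (by positivity) (by positivity)
    refine ⟨δ, hδpos, fun D hD => ?_⟩
    rw [dist_symmProd] at hD
    have ha : |aD D - aD D₀| < δ := lt_of_le_of_lt (abs_aD_le D D₀) hD
    have hb : |bD D - bD D₀| < δ := lt_of_le_of_lt (abs_bD_le D D₀) hD
    have hδr4 : δ ≤ r / 4 := le_trans (min_le_right _ _) (min_le_left _ _)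
    have hδ36 : δ ≤ ε * r ^ 2 / 36 :=
      le_trans (min_le_right _ _) (le_trans (min_le_right _ _) (min_le_left _ _))
    have hδ6 : δ ≤ ε * r / 6 :=
      le_trans (min_le_right _ _) (le_trans (min_le_right _ _) (min_le_right _ _))
    have ha' := abs_lt.1 ha
    have hb' := abs_lt.1 hb
    have hba : r / 2 ≤ bD D - aD D := by
      simp only [hrdef] at *
      linarith
    have hlt : aD D < bD D := by linarith
    have hp : dist (pD D) (pD D₀) < δ₁ := by
      rw [Subtype.dist_eq, Prod.dist_eq]
      apply lt_of_lt_of_le _ (min_le_left δ₁ _ : δ ≤ δ₁)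
      apply max_lt
      · exact lt_of_le_of_lt (le_of_eq (Real.dist_eq _ _)) ha
      · exact lt_of_le_of_lt (le_of_eq (Real.dist_eq _ _)) hb
    have hσp : dist (σ (pD D)) (σ (pD D₀)) < ε₂ := hδ₁ _ hp
    rw [Subtype.dist_eq, Prod.dist_eq] at hσp
    have hc : |cD σ D - cD σ D₀| < ε₂ := by
      rw [← Real.dist_eq]
      exact lt_of_le_of_lt (le_max_left _ _) hσp
    have hd : |dD σ D - dD σ D₀| < ε₂ := by
      rw [← Real.dist_eq]
      exact lt_of_le_of_lt (le_max_right _ _) hσp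
    -- the two image sets
    have hrange : bD D - aD D ≤ 1 := by
      have := aD_nonneg D
      have := bD_le_one D
      linarith
    have hbound : ∀ x ∈ rS D, |g σ D x - g σ D₀ x| ≤ 3 * ε₂ + 6 * δ / r ^ 2 := by
      intro x hx
      exact lmap_close hr rfl hba hrange ⟨aD_le hx, le_bD hx⟩ ha.le hb.le hc.le hd.le
        (cD_nonneg σ D₀) (cD_le_dD σ D₀) (dD_le_one σ D₀)
    have hEB : (0:ℝ) ≤ 3 * ε₂ + 6 * δ / r ^ 2 := by positivity
    have hE1 : EMetric.hausdorffEdist (g σ D '' rS D) (g σ D₀ '' rS D) ≠ ⊤ :=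
      hausdorffEdist_ne_top_of_nonempty_of_bounded ((rS_nonempty D).image _)
        ((rS_nonempty D).image _) (((rS_finite D).image _).isBounded)
        (((rS_finite D).image _).isBounded)
    have hT1 : hausdorffDist (g σ D '' rS D) (g σ D₀ '' rS D) ≤ 3 * ε₂ + 6 * δ / r ^ 2 := by
      apply hausdorffDist_le_of_mem_dist hEB
      · rintro y ⟨x, hx, rfl⟩
        exact ⟨g σ D₀ x, Set.mem_image_of_mem _ hx, hbound x hx⟩
      · rintro y ⟨x, hx, rfl⟩
        refine ⟨g σ D x, Set.mem_image_of_mem _ hx, ?_⟩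
        rw [dist_comm]
        exact hbound x hx
    have hT2 : hausdorffDist (g σ D₀ '' rS D) (g σ D₀ '' rS D₀) ≤ δ / r := by
      have hfac : (dD σ D₀ - cD σ D₀) / (bD D₀ - aD D₀) ≤ 1 / r := by
        rw [← hrdef]
        have h1 : dD σ D₀ - cD σ D₀ ≤ 1 := by
          have := cD_nonneg σ D₀
          have := dD_le_one σ D₀
          linarith
        exact div_le_div₀ zero_le_one h1 hr le_rfl
      have hδr : (0:ℝ) ≤ δ / r := by positivity
      apply hausdorffDist_le_of_mem_dist hδr
      · rintro y ⟨x, hx, rfl⟩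
        obtain ⟨x', hx', hxx'⟩ := exists_dist_lt_of_hausdorffDist_lt hx hD (hED D D₀)
        refine ⟨g σ D₀ x', Set.mem_image_of_mem _ hx', ?_⟩
        rw [g, lmap_dist h0 (cD_le_dD σ D₀)]
        calc dist x x' * ((dD σ D₀ - cD σ D₀) / (bD D₀ - aD D₀))
            ≤ δ * (1 / r) := mul_le_mul hxx'.le hfac
              (div_nonneg (by linarith [cD_le_dD σ D₀]) (by linarith)) hδpos.le
          _ = δ / r := by ring
      · rintro y ⟨x, hx, rfl⟩
        obtain ⟨x', hx', hxx'⟩ := exists_dist_lt_of_hausdorffDist_lt' hx hD (hED D D₀)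
        refine ⟨g σ D₀ x', Set.mem_image_of_mem _ hx', ?_⟩
        rw [g, lmap_dist h0 (cD_le_dD σ D₀)]
        calc dist x x' * ((dD σ D₀ - cD σ D₀) / (bD D₀ - aD D₀))
            ≤ δ * (1 / r) := mul_le_mul (by rw [dist_comm]; exact hxx'.le) hfac
              (div_nonneg (by linarith [cD_le_dD σ D₀]) (by linarith)) hδpos.le
          _ = δ / r := by ring
    -- assemble
    have hE2 : EMetric.hausdorffEdist (g σ D '' rS D) (g σ D₀ '' rS D) ≠ ⊤ := hE1
    have htri : hausdorffDist (g σ D '' rS D) (g σ D₀ '' rS D₀)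
        ≤ hausdorffDist (g σ D '' rS D) (g σ D₀ '' rS D)
          + hausdorffDist (g σ D₀ '' rS D) (g σ D₀ '' rS D₀) :=
      hausdorffDist_triangle hE1
    have hfin1 : 6 * δ / r ^ 2 ≤ ε / 6 := by
      rw [div_le_iff₀ (by positivity)]
      nlinarith
    have hfin2 : δ / r ≤ ε / 6 := by
      rw [div_le_iff₀ hr]
      nlinarith
    have h3e : 3 * ε₂ = ε / 3 := by rw [hε₂def]; ring
    rw [dist_symmProd, rS_hmap σ hlt, rS_hmap σ h0]
    calc hausdorffDist (g σ D '' rS D) (g σ D₀ '' rS D₀)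
        ≤ (3 * ε₂ + 6 * δ / r ^ 2) + δ / r := le_trans htri (add_le_add hT1 hT2)
      _ < ε := by rw [h3e]; linarith
  -- Case: aD D₀ = bD D₀
  · obtain ⟨δ₁, hδ₁pos, hδ₁⟩ := Metric.continuous_iff.1 σ.continuous (pD D₀) (ε / 4)
      (by positivity)
    set δ : ℝ := min δ₁ (ε / 4) with hδdef
    have hδpos : 0 < δ := lt_min hδ₁pos (by positivity)
    refine ⟨δ, hδpos, fun D hD => ?_⟩
    rw [dist_symmProd] at hD
    have hS₀ : rS D₀ = {aD D₀} := rS_eq_singleton h0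
    have hnear : ∀ x ∈ rS D, dist x (aD D₀) < δ := by
      intro x hx
      obtain ⟨y, hy, hxy⟩ := exists_dist_lt_of_hausdorffDist_lt hx hD (hED D D₀)
      rw [hS₀, mem_singleton_iff] at hy
      rwa [hy] at hxy
    have haa : dist (aD D) (aD D₀) < δ := hnear _ (aD_mem D)
    have hbb : dist (bD D) (aD D₀) < δ := hnear _ (bD_mem D)
    have hp : dist (pD D) (pD D₀) < δ₁ := by
      rw [Subtype.dist_eq, Prod.dist_eq]
      apply lt_of_lt_of_le _ (min_le_left δ₁ (ε / 4) : δ ≤ δ₁)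
      apply max_lt haa
      show dist (bD D) (bD D₀) < δ
      rwa [← h0]
    have hσp : dist (σ (pD D)) (σ (pD D₀)) < ε / 4 := hδ₁ _ hp
    have hfix : σ (pD D₀) = pD D₀ := hdiag _ h0
    rw [hfix, Subtype.dist_eq, Prod.dist_eq] at hσp
    have hc : |cD σ D - aD D₀| < ε / 4 := by
      rw [← Real.dist_eq]
      exact lt_of_le_of_lt (le_max_left _ _) hσp
    have hd : |dD σ D - bD D₀| < ε / 4 := by
      rw [← Real.dist_eq]
      exact lt_of_le_of_lt (le_max_right _ _) hσp
    rw [← h0] at hd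
    have key : ∀ y ∈ rS (hmap σ D), dist y (aD D₀) ≤ ε / 2 := by
      intro y hy
      rcases lt_or_eq_of_le (aD_le_bD D) with hlt | heq
      · rw [rS_hmap σ hlt] at hy
        obtain ⟨x, hx, rfl⟩ := hy
        have hmem : g σ D x ∈ Icc (cD σ D) (dD σ D) :=
          lmap_mem hlt (cD_le_dD σ D) ⟨aD_le hx, le_bD hx⟩
        rw [Real.dist_eq, abs_le]
        have hc' := abs_lt.1 hc
        have hd' := abs_lt.1 hd
        constructor
        · linarith [hmem.1]
        · linarith [hmem.2]
      · rw [hmap_of_eq σ heq] at hy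
        have := hnear y hy
        have hδ4 : δ ≤ ε / 4 := min_le_right _ _
        linarith [this]
    rw [dist_symmProd, hmap_of_eq σ h0, hS₀]
    have hfinal : hausdorffDist (rS (hmap σ D)) {aD D₀} ≤ ε / 2 := by
      apply hausdorffDist_le_of_mem_dist (by positivity)
      · intro x hx
        exact ⟨aD D₀, mem_singleton _, key x hx⟩
      · intro y hy
        rw [mem_singleton_iff] at hy
        obtain ⟨x, hx⟩ := rS_nonempty (hmap σ D)
        refine ⟨x, hx, ?_⟩
        rw [hy, dist_comm]
        exact key x hx
    linarith [hfinal]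

end

end Stmt10Aux

theorem stmt10 (n : ℕ) (hn : 2 ≤ n) (σ : Tri ≃ₜ Tri)
    (hdiag : ∀ p : Tri, (p : ℝ × ℝ).1 = (p : ℝ × ℝ).2 → σ p = p) :
    ∃ h : SymmProd unitInterval n ≃ₜ SymmProd unitInterval n,
      ∀ D : SymmProd unitInterval n,
        (D.toSet.ncard = 1 → h D = D) ∧
        (D.toSet.ncard ≠ 1 →
          ∀ p : Tri, (p : ℝ × ℝ) =
              (sInf ((↑) '' D.toSet : Set ℝ), sSup ((↑) '' D.toSet : Set ℝ)) →
            ((↑) '' (h D).toSet : Set ℝ) =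
              (fun t : ℝ =>
                  ((t - (p : ℝ × ℝ).1) / ((p : ℝ × ℝ).2 - (p : ℝ × ℝ).1)) *
                      (σ p : ℝ × ℝ).2 +
                    (((p : ℝ × ℝ).2 - t) / ((p : ℝ × ℝ).2 - (p : ℝ × ℝ).1)) *
                      (σ p : ℝ × ℝ).1) '' ((↑) '' D.toSet : Set ℝ)) := by
  have hdiag' : ∀ p : Tri, (p : ℝ × ℝ).1 = (p : ℝ × ℝ).2 → σ.symm p = p := by
    intro p hp
    have h2 : p = σ.symm p := by
      have := congrArg σ.symm (hdiag p hp)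
      rwa [Homeomorph.symm_apply_apply] at this
    exact h2.symm
  refine ⟨⟨⟨Stmt10Aux.hmap σ, Stmt10Aux.hmap σ.symm,
    fun D => Stmt10Aux.hmap_hmap σ hdiag D, fun D => ?_⟩,
    Stmt10Aux.hmap_continuous σ hdiag, Stmt10Aux.hmap_continuous σ.symm hdiag'⟩, ?_⟩
  · have := Stmt10Aux.hmap_hmap σ.symm hdiag' D
    rwa [Homeomorph.symm_symm] at this
  · intro D
    constructor
    · intro h1
      exact Stmt10Aux.hmap_of_eq σ ((Stmt10Aux.ncard_eq_one_iff D).1 h1)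
    · intro h1 p hp
      have hne : Stmt10Aux.aD D ≠ Stmt10Aux.bD D := fun h =>
        h1 ((Stmt10Aux.ncard_eq_one_iff D).2 h)
      have hlt : Stmt10Aux.aD D < Stmt10Aux.bD D :=
        lt_of_le_of_ne (Stmt10Aux.aD_le_bD D) hne
      have hpp : p = Stmt10Aux.pD D := Subtype.ext hp
      subst hpp
      exact Stmt10Aux.rS_hmap σ hlt
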